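/- Let q be a complex number with |q| = 1, and let V₁, V₂ be isometries on a complex Hilbert space H such that V = V₁V₂ is a shift. Let 𝔯_q be the unitary defined by 𝔯_q h = Σ_{n≥0} qⁿ Vⁿ(I − VV*)V^{*n}h. Then: (1) (V₁,V₂) is commutative (V₁V₂ = V₂V₁) if and only if (V₁𝔯_q, 𝔯_{q̄}V₂) is q-commutative; (2) (V₁,V₂) is q-commutative if and only if (V₁𝔯_{q̄}, 𝔯_q V₂) is commutative. -/

import Mathlib

open ContinuousLinearMap Filter

/-- Auxiliary lemma: for a shift `V` and a unimodular `q`, the operator `R` defined by the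
series `R h = ∑ qⁿ Vⁿ(1-VV*)V*ⁿ h` satisfies `R' ∘ R = 1` (where `R'` is the analogous
operator for `q̄`) and the intertwining relation `R V = q V R`. -/
lemma aux_rq {H : Type*} [NormedAddCommGroup H] [InnerProductSpace ℂ H] [CompleteSpace H]
    (q : ℂ) (hq : ‖q‖ = 1) (V : H →L[ℂ] H)
    (hV : adjoint V ∘L V = 1)
    (hshift : ∀ h : H, Tendsto (fun n : ℕ => ((adjoint V) ^ n) h) atTop (nhds 0))
    (R R' : H →L[ℂ] H)
    (hR : ∀ h : H, HasSum
      (fun n : ℕ => q ^ n • ((V ^ n) ((1 - V ∘L adjoint V) (((adjoint V) ^ n) h)))) (R h))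
    (hR' : ∀ h : H, HasSum
      (fun n : ℕ => (starRingEnd ℂ q) ^ n •
        ((V ^ n) ((1 - V ∘L adjoint V) (((adjoint V) ^ n) h)))) (R' h)) :
    (R' ∘L R = 1) ∧ (R ∘L V = q • (V ∘L R)) := by
  set A := adjoint V with hA
  set E : H →L[ℂ] H := 1 - V ∘L A with hE
  -- basic pointwise identities
  have l1 : ∀ x, A (V x) = x := by
    intro x
    have := ContinuousLinearMap.ext_iff.mp hV x
    simpa using this
  have lE : ∀ x, E x = x - V (A x) := by
    intro x; simp [hE]
  have l2 : ∀ x, E (V x) = 0 := by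
    intro x; rw [lE, l1, sub_self]
  have l3 : ∀ x, A (E x) = 0 := by
    intro x; rw [lE, map_sub, l1, sub_self]
  have l4 : ∀ x, E (E x) = E x := by
    intro x; rw [lE (E x), l3, map_zero, sub_zero]
  have powS : ∀ (W : H →L[ℂ] H) (n : ℕ) (x : H), (W ^ (n + 1)) x = (W ^ n) (W x) := by
    intro W n x; rw [pow_succ, ContinuousLinearMap.mul_apply]
  have powS' : ∀ (W : H →L[ℂ] H) (n : ℕ) (x : H), (W ^ (n + 1)) x = W ((W ^ n) x) := by
    intro W n x; rw [pow_succ', ContinuousLinearMap.mul_apply]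
  have powAdd : ∀ (W : H →L[ℂ] H) (m k : ℕ) (x : H), (W ^ (m + k)) x = (W ^ m) ((W ^ k) x) := by
    intro W m k x; rw [pow_add, ContinuousLinearMap.mul_apply]
  have linv : ∀ (n : ℕ) (x : H), (A ^ n) ((V ^ n) x) = x := by
    intro n
    induction n with
    | zero => intro x; simp
    | succ k ih =>
      intro x
      rw [powS A k, powS' V k, l1, ih]
  have lEVk : ∀ (k : ℕ) (x : H), k ≠ 0 → E ((V ^ k) x) = 0 := by
    intro k x hk
    obtain ⟨j, rfl⟩ := Nat.exists_eq_succ_of_ne_zero hk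
    rw [powS' V j, l2]
  have lAkE : ∀ (k : ℕ) (x : H), k ≠ 0 → (A ^ k) (E x) = 0 := by
    intro k x hk
    obtain ⟨j, rfl⟩ := Nat.exists_eq_succ_of_ne_zero hk
    rw [powS A j, l3, map_zero]
  -- the wandering terms
  set T : ℕ → H → H := fun n x => (V ^ n) (E ((A ^ n) x)) with hT
  have Tdiag : ∀ n x, T n (T n x) = T n x := by
    intro n x
    simp only [hT]
    rw [linv, l4]
  have Torth : ∀ m n x, m ≠ n → T m (T n x) = 0 := by
    intro m n x hmn
    simp only [hT]
    rcases lt_or_gt_of_ne hmn with hlt | hgt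
    · -- m < n
      obtain ⟨k, hk, rfl⟩ : ∃ k, k ≠ 0 ∧ n = m + k :=
        ⟨n - m, by omega, by omega⟩
      rw [powAdd V m k, linv, lEVk k _ hk, map_zero]
    · -- n < m
      obtain ⟨k, hk, rfl⟩ : ∃ k, k ≠ 0 ∧ m = k + n :=
        ⟨m - n, by omega, by omega⟩
      rw [powAdd A k n, linv, lAkE k _ hk, map_zero, map_zero]
  -- R and R' act diagonally on the wandering terms
  have RT : ∀ n x, R (T n x) = q ^ n • T n x := by
    intro n x
    have h1 : HasSum (fun m : ℕ => q ^ m • T m (T n x)) (R (T n x)) := hR (T n x)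
    have h2 : HasSum (fun m : ℕ => q ^ m • T m (T n x)) (q ^ n • T n x) := by
      have := hasSum_single (f := fun m : ℕ => q ^ m • T m (T n x)) n
        (fun m hm => by
          show q ^ m • T m (T n x) = 0
          rw [Torth m n x hm, smul_zero])
      simpa only [Tdiag n x] using this
    exact h1.unique h2
  have R'T : ∀ n x, R' (T n x) = (starRingEnd ℂ q) ^ n • T n x := by
    intro n x
    have h1 : HasSum (fun m : ℕ => (starRingEnd ℂ q) ^ m • T m (T n x)) (R' (T n x)) :=
      hR' (T n x)
    have h2 : HasSum (fun m : ℕ => (starRingEnd ℂ q) ^ m • T m (T n x))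
        ((starRingEnd ℂ q) ^ n • T n x) := by
      have := hasSum_single (f := fun m : ℕ => (starRingEnd ℂ q) ^ m • T m (T n x)) n
        (fun m hm => by
          show (starRingEnd ℂ q) ^ m • T m (T n x) = 0
          rw [Torth m n x hm, smul_zero])
      simpa only [Tdiag n x] using this
    exact h1.unique h2
  have hqq : q * starRingEnd ℂ q = 1 := by
    rw [Complex.mul_conj]
    norm_cast
    rw [Complex.normSq_eq_norm_sq, hq, one_pow]
  -- isometry of powers of V
  have normV : ∀ x, ‖V x‖ = ‖x‖ := by
    intro x
    have h1 : (inner ℂ (V x) (V x) : ℂ) = inner ℂ x x := by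
      rw [← ContinuousLinearMap.adjoint_inner_left, ← hA, l1]
    have h3 : ‖V x‖ ^ 2 = ‖x‖ ^ 2 := by
      rw [norm_sq_eq_re_inner (𝕜 := ℂ), norm_sq_eq_re_inner (𝕜 := ℂ), h1]
    nlinarith [norm_nonneg (V x), norm_nonneg x]
  have normVn : ∀ (n : ℕ) (x : H), ‖(V ^ n) x‖ = ‖x‖ := by
    intro n
    induction n with
    | zero => intro x; simp
    | succ k ih => intro x; rw [powS' V k, normV, ih]
  -- R' ∘ R = 1
  have hR'R : R' ∘L R = 1 := by
    ext h
    simp only [ContinuousLinearMap.comp_apply, ContinuousLinearMap.one_apply]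
    have hsum : HasSum (fun n : ℕ => T n h) (R' (R h)) := by
      have h1 : HasSum (fun n : ℕ => R' (q ^ n • T n h)) (R' (R h)) :=
        (hR h).mapL R'
      have h2 : ∀ n : ℕ, R' (q ^ n • T n h) = T n h := by
        intro n
        rw [map_smul, R'T, smul_smul, ← mul_pow, hqq, one_pow, one_smul]
      simpa only [h2] using h1
    set f : ℕ → H := fun n => (V ^ n) ((A ^ n) h) with hf
    have hTf : ∀ n, T n h = f n - f (n + 1) := by
      intro n
      simp only [hT, hf]
      rw [lE, map_sub]
      congr 1
      rw [← powS' A n, ← powS V n]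
    have hpartial : ∀ N : ℕ, (∑ i ∈ Finset.range N, T i h) = h - f N := by
      intro N
      calc (∑ i ∈ Finset.range N, T i h) = ∑ i ∈ Finset.range N, (f i - f (i + 1)) :=
            Finset.sum_congr rfl (fun i _ => hTf i)
        _ = f 0 - f N := Finset.sum_range_sub' f N
        _ = h - f N := by simp [hf]
    have ht1 : Tendsto (fun N : ℕ => ∑ i ∈ Finset.range N, T i h) atTop (nhds (R' (R h))) :=
      hsum.tendsto_sum_nat
    have hf0 : Tendsto (fun N : ℕ => f N) atTop (nhds 0) := by
      rw [tendsto_zero_iff_norm_tendsto_zero]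
      have : (fun N : ℕ => ‖f N‖) = fun N : ℕ => ‖(A ^ N) h‖ := by
        funext N; rw [hf]; exact normVn N _
      rw [this]
      simpa using (hshift h).norm
    have ht2 : Tendsto (fun N : ℕ => ∑ i ∈ Finset.range N, T i h) atTop (nhds h) := by
      have heq : (fun N : ℕ => ∑ i ∈ Finset.range N, T i h) = fun N => h - f N := by
        funext N; exact hpartial N
      rw [heq]
      simpa using (tendsto_const_nhds (x := h)).sub hf0
    exact tendsto_nhds_unique ht1 ht2
  -- intertwining R V = q V R
  have hRV : R ∘L V = q • (V ∘L R) := by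
    ext h
    simp only [ContinuousLinearMap.comp_apply, ContinuousLinearMap.smul_apply]
    set g : ℕ → H := fun n => q ^ n • T n (V h) with hg
    have hg0 : g 0 = 0 := by
      simp only [hg, hT, pow_zero, one_smul]
      simp only [ContinuousLinearMap.one_apply]
      rw [l2]
    have hTsucc : ∀ n : ℕ, T (n + 1) (V h) = V (T n h) := by
      intro n
      simp only [hT]
      rw [powS A n, l1, powS' V n]
    have hgsucc : ∀ n : ℕ, g (n + 1) = q • V (q ^ n • T n h) := by
      intro n
      rw [hg]
      simp only
      rw [hTsucc, map_smul, smul_smul, ← pow_succ']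
    have h1 : HasSum (fun n : ℕ => q • V (q ^ n • T n h)) (q • V (R h)) := by
      have := (hR h).mapL (q • V)
      simpa only [ContinuousLinearMap.smul_apply] using this
    have h2 : HasSum (fun n : ℕ => g (n + 1)) (q • V (R h)) := by
      simpa only [hgsucc] using h1
    have h3 : HasSum g (q • V (R h) + ∑ i ∈ Finset.range 1, g i) :=
      (hasSum_nat_add_iff 1).mp h2
    have h4 : HasSum g (q • V (R h)) := by
      simpa [hg0] using h3
    exact (hR (V h)).unique h4
  exact ⟨hR'R, hRV⟩

theorem stmt_9 {H : Type*} [NormedAddCommGroup H] [InnerProductSpace ℂ H] [CompleteSpace H]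
    (q : ℂ) (hq : ‖q‖ = 1) (V₁ V₂ : H →L[ℂ] H)
    (hV₁ : adjoint V₁ ∘L V₁ = 1) (hV₂ : adjoint V₂ ∘L V₂ = 1)
    (hshift : ∀ h : H,
      Tendsto (fun n : ℕ => ((adjoint (V₁ ∘L V₂)) ^ n) h) atTop (nhds 0))
    (𝔯q 𝔯q' : H →L[ℂ] H)
    (h𝔯q : ∀ h : H, HasSum
      (fun n : ℕ => q ^ n • (((V₁ ∘L V₂) ^ n)
        ((1 - (V₁ ∘L V₂) ∘L adjoint (V₁ ∘L V₂)) (((adjoint (V₁ ∘L V₂)) ^ n) h))))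
      (𝔯q h))
    (h𝔯q' : ∀ h : H, HasSum
      (fun n : ℕ => (starRingEnd ℂ q) ^ n • (((V₁ ∘L V₂) ^ n)
        ((1 - (V₁ ∘L V₂) ∘L adjoint (V₁ ∘L V₂)) (((adjoint (V₁ ∘L V₂)) ^ n) h))))
      (𝔯q' h)) :
    (V₁ ∘L V₂ = V₂ ∘L V₁ ↔
      (V₁ ∘L 𝔯q) ∘L (𝔯q' ∘L V₂) = q • ((𝔯q' ∘L V₂) ∘L (V₁ ∘L 𝔯q))) ∧
    (V₁ ∘L V₂ = q • (V₂ ∘L V₁) ↔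
      (V₁ ∘L 𝔯q') ∘L (𝔯q ∘L V₂) = (𝔯q ∘L V₂) ∘L (V₁ ∘L 𝔯q')) := by
  set V : H →L[ℂ] H := V₁ ∘L V₂ with hVdef
  have hV : adjoint V ∘L V = 1 := by
    rw [hVdef, ContinuousLinearMap.adjoint_comp]
    calc (adjoint V₂ ∘L adjoint V₁) ∘L (V₁ ∘L V₂)
        = adjoint V₂ ∘L ((adjoint V₁ ∘L V₁) ∘L V₂) := by
          rw [ContinuousLinearMap.comp_assoc, ContinuousLinearMap.comp_assoc]
      _ = adjoint V₂ ∘L V₂ := by rw [hV₁]; ext y; simp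
      _ = 1 := hV₂
  have hq' : ‖starRingEnd ℂ q‖ = 1 := by
    rwa [RCLike.norm_conj]
  have h𝔯q2 : ∀ h : H, HasSum
      (fun n : ℕ => (starRingEnd ℂ (starRingEnd ℂ q)) ^ n •
        ((V ^ n) ((1 - V ∘L adjoint V) (((adjoint V) ^ n) h)))) (𝔯q h) := by
    intro h
    simpa only [Complex.conj_conj] using h𝔯q h
  obtain ⟨hR'R, hRV⟩ := aux_rq q hq V hV hshift 𝔯q 𝔯q' h𝔯q h𝔯q'
  obtain ⟨hRR', hR'V⟩ := aux_rq (starRingEnd ℂ q) hq' V hV hshift 𝔯q' 𝔯q h𝔯q' h𝔯q2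
  -- pointwise versions
  have pR'R : ∀ x, 𝔯q' (𝔯q x) = x := by
    intro x; have := ContinuousLinearMap.ext_iff.mp hR'R x; simpa using this
  have pRR' : ∀ x, 𝔯q (𝔯q' x) = x := by
    intro x; have := ContinuousLinearMap.ext_iff.mp hRR' x; simpa using this
  have pRV : ∀ x, 𝔯q (V x) = q • V (𝔯q x) := by
    intro x; have := ContinuousLinearMap.ext_iff.mp hRV x; simpa using this
  have pR'V : ∀ x, 𝔯q' (V x) = (starRingEnd ℂ q) • V (𝔯q' x) := by
    intro x; have := ContinuousLinearMap.ext_iff.mp hR'V x; simpa using this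
  have hqq : q * starRingEnd ℂ q = 1 := by
    rw [Complex.mul_conj]
    norm_cast
    rw [Complex.normSq_eq_norm_sq, hq, one_pow]
  have hqne : q ≠ 0 := by
    intro h; rw [h, norm_zero] at hq; norm_num at hq
  constructor
  · -- part (1)
    constructor
    · intro hc
      have hcpt : ∀ y, V₂ (V₁ y) = V y := by
        intro y
        have := ContinuousLinearMap.ext_iff.mp hc y
        simp only [ContinuousLinearMap.comp_apply] at this
        exact this.symm
      ext x
      simp only [ContinuousLinearMap.comp_apply, ContinuousLinearMap.smul_apply]
      rw [pRR' (V₂ x), hcpt (𝔯q x), pR'V, pR'R, smul_smul, hqq, one_smul]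
      rfl
    · intro hc
      have e : ∀ y, V y = q • 𝔯q' ((V₂ ∘L V₁) (𝔯q y)) := by
        intro y
        have h := ContinuousLinearMap.ext_iff.mp hc y
        simp only [ContinuousLinearMap.comp_apply, ContinuousLinearMap.smul_apply,
          pRR'] at h
        exact h
      ext x
      show V x = (V₂ ∘L V₁) x
      have e2 := e (𝔯q' x)
      rw [pRR'] at e2
      have e3 := congrArg 𝔯q e2
      rw [pRV, pRR', map_smul, pRR'] at e3
      exact smul_right_injective H hqne e3
  · -- part (2)
    constructor
    · intro hc
      have hcpt : ∀ y, (V₂ ∘L V₁) y = (starRingEnd ℂ q) • V y := by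
        intro y
        have h := ContinuousLinearMap.ext_iff.mp hc y
        simp only [ContinuousLinearMap.smul_apply] at h
        rw [h, smul_smul, mul_comm, hqq, one_smul]
      ext x
      simp only [ContinuousLinearMap.comp_apply]
      rw [pR'R (V₂ x)]
      show V x = 𝔯q ((V₂ ∘L V₁) (𝔯q' x))
      rw [hcpt, map_smul, pRV, pRR', smul_smul, mul_comm, hqq, one_smul]
    · intro hc
      have e : ∀ y, V y = 𝔯q ((V₂ ∘L V₁) (𝔯q' y)) := by
        intro y
        have h := ContinuousLinearMap.ext_iff.mp hc y
        simp only [ContinuousLinearMap.comp_apply, pR'R] at h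
        exact h
      ext x
      show V x = (q • (V₂ ∘L V₁)) x
      have e2 := e (𝔯q x)
      rw [pR'R] at e2
      have e3 := congrArg 𝔯q' e2
      rw [pR'V, pR'R, pR'R] at e3
      -- e3 : (starRingEnd ℂ q) • V x = (V₂ ∘L V₁) x
      simp only [ContinuousLinearMap.smul_apply]
      rw [← e3, smul_smul, hqq, one_smul]
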